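/- Let Q₃ be a nonnegative quadratic form on R^{3×3} that is positive definite on the subspace sym·A^{-1} and depends only on the projection onto sym·A^{-1} (A symmetric positive definite of block form diag(A₂, 1)). Define Q₂(F₂) = min{ Q₃(F̃) : F̃ ∈ R^{3×3}, F̃ has 2×2 principal block F₂ }. Then the minimum is attained, Q₂ is a quadratic form on R^{2×2}, and there exists a linear map c : R^{2×2} → R³ such that Q₂(F₂) = Q₃ of the matrix with block F₂, third column (c₁, c₂, c₃) and zero entries in positions (3,1),(3,2). -/

import Mathlib

open Matrix

/-- The Frobenius inner product `F : G = tr(Fᵀ G)`. -/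
noncomputable def frob {n : ℕ} (F G : Matrix (Fin n) (Fin n) ℝ) : ℝ :=
  Matrix.trace (Fᵀ * G)

/-- The `2×2` principal block of a `3×3` matrix. -/
def blk (F : Matrix (Fin 3) (Fin 3) ℝ) : Matrix (Fin 2) (Fin 2) ℝ :=
  Matrix.of fun α β => F α.castSucc β.castSucc

/-- The `3×3` matrix with principal `2×2` block `M`, third column `v`, and zeros in
positions `(3,1)` and `(3,2)`. -/
def augment (M : Matrix (Fin 2) (Fin 2) ℝ) (v : Fin 3 → ℝ) : Matrix (Fin 3) (Fin 3) ℝ :=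
  Matrix.of fun i j =>
    if hj : j = Fin.last 2 then v i
    else if hi : i = Fin.last 2 then 0
    else M (i.castPred hi) (j.castPred hj)

def Lmap : Matrix (Fin 2) (Fin 2) ℝ →ₗ[ℝ] Matrix (Fin 3) (Fin 3) ℝ where
  toFun M := augment M 0
  map_add' x y := by
    ext i j; by_cases hj : j = Fin.last 2 <;> by_cases hi : i = Fin.last 2 <;>
      simp_all [augment]
  map_smul' r x := by
    ext i j; by_cases hj : j = Fin.last 2 <;> by_cases hi : i = Fin.last 2 <;>
      simp_all [augment]

def Nmap : (Fin 3 → ℝ) →ₗ[ℝ] Matrix (Fin 3) (Fin 3) ℝ where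
  toFun v := augment 0 v
  map_add' x y := by
    ext i j; by_cases hj : j = Fin.last 2 <;> by_cases hi : i = Fin.last 2 <;>
      simp_all [augment]
  map_smul' r x := by
    ext i j; by_cases hj : j = Fin.last 2 <;> by_cases hi : i = Fin.last 2 <;>
      simp_all [augment]

lemma augment_eq (M : Matrix (Fin 2) (Fin 2) ℝ) (v : Fin 3 → ℝ) :
    augment M v = Lmap M + Nmap v := by
  ext i j; by_cases hj : j = Fin.last 2 <;> by_cases hi : i = Fin.last 2 <;>
    simp_all [augment, Lmap, Nmap]

lemma blk_augment (M : Matrix (Fin 2) (Fin 2) ℝ) (v : Fin 3 → ℝ) :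
    blk (augment M v) = M := by
  ext a b
  simp [blk, augment, (Fin.castSucc_lt_last a).ne, (Fin.castSucc_lt_last b).ne,
    show b.castSucc ≠ 2 from (Fin.castSucc_lt_last b).ne,
    show a.castSucc ≠ 2 from (Fin.castSucc_lt_last a).ne]

/-- for `Q₃` a nonnegative quadratic form on `ℝ^{3×3}`, positive definite on
`sym·A⁻¹` and depending only on the Frobenius-orthogonal projection onto `sym·A⁻¹`
(`A = diag(A₂,1)` symmetric positive definite), the minimum defining
`Q₂(F₂) = min {Q₃(F̃) : F̃ has principal block F₂}` is attained, `Q₂` is a quadratic form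
on `ℝ^{2×2}`, and there is a linear map `c : ℝ^{2×2} → ℝ³` with
`Q₂(F₂) = Q₃` of the matrix with block `F₂`, third column `c(F₂)` and zeros at `(3,1),(3,2)`. -/
theorem Q2_minimum_attained_and_quadratic
    (A : Matrix (Fin 3) (Fin 3) ℝ) (hA_symm : A.IsSymm) (hA_pos : A.PosDef)
    (hA13 : A 0 2 = 0) (hA23 : A 1 2 = 0) (hA31 : A 2 0 = 0) (hA32 : A 2 1 = 0)
    (hA33 : A 2 2 = 1)
    (Q3 : Matrix (Fin 3) (Fin 3) ℝ → ℝ)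
    (hQ3_quad : ∃ B : Matrix (Fin 3) (Fin 3) ℝ →ₗ[ℝ] Matrix (Fin 3) (Fin 3) ℝ →ₗ[ℝ] ℝ,
      ∀ F, Q3 F = B F F)
    (hQ3_nonneg : ∀ F, 0 ≤ Q3 F)
    (hQ3_posdef : ∀ S : Matrix (Fin 3) (Fin 3) ℝ, S.IsSymm → S * A⁻¹ ≠ 0 →
      0 < Q3 (S * A⁻¹))
    (hQ3_proj : ∀ F G : Matrix (Fin 3) (Fin 3) ℝ,
      (∀ S : Matrix (Fin 3) (Fin 3) ℝ, S.IsSymm → frob (F - G) (S * A⁻¹) = 0) →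
      Q3 F = Q3 G)
    (Q2 : Matrix (Fin 2) (Fin 2) ℝ → ℝ)
    (hQ2 : ∀ F₂, Q2 F₂ = sInf {q | ∃ F' : Matrix (Fin 3) (Fin 3) ℝ, blk F' = F₂ ∧ q = Q3 F'}) :
    (∀ F₂, ∃ F' : Matrix (Fin 3) (Fin 3) ℝ, blk F' = F₂ ∧ Q3 F' = Q2 F₂) ∧
    (∃ B₂ : Matrix (Fin 2) (Fin 2) ℝ →ₗ[ℝ] Matrix (Fin 2) (Fin 2) ℝ →ₗ[ℝ] ℝ,
      ∀ F₂, Q2 F₂ = B₂ F₂ F₂) ∧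
    (∃ c : Matrix (Fin 2) (Fin 2) ℝ →ₗ[ℝ] (Fin 3 → ℝ),
      ∀ F₂, Q2 F₂ = Q3 (augment F₂ (c F₂))) := by
  obtain ⟨B, hB⟩ := hQ3_quad
  -- basic facts about A
  have hdet : IsUnit A.det := hA_pos.det_pos.ne'.isUnit
  have hAA : A * A⁻¹ = 1 := Matrix.mul_nonsing_inv A hdet
  have hA'A : A⁻¹ * A = 1 := Matrix.nonsing_inv_mul A hdet
  have hAiT : A⁻¹ᵀ = A⁻¹ := by
    rw [Matrix.transpose_nonsing_inv, hA_symm.eq]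
  have hAinv_row : ∀ j, A⁻¹ 2 j = if (2 : Fin 3) = j then 1 else 0 := by
    intro j
    have h := congrFun (congrFun hAA 2) j
    simpa [Matrix.mul_apply, Fin.sum_univ_three, hA31, hA32, hA33, Matrix.one_apply] using h
  have hAinv_col : ∀ i, A⁻¹ i 2 = if i = (2 : Fin 3) then 1 else 0 := by
    intro i
    have h := congrFun (congrFun hA'A i) 2
    simpa [Matrix.mul_apply, Fin.sum_univ_three, hA13, hA23, hA33, Matrix.one_apply] using h
  -- orthogonality to sym·A⁻¹ criterion
  have horth : ∀ M : Matrix (Fin 3) (Fin 3) ℝ, (M * A⁻¹)ᵀ = -(M * A⁻¹) →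
      ∀ S : Matrix (Fin 3) (Fin 3) ℝ, S.IsSymm → frob M (S * A⁻¹) = 0 := by
    intro M hM S hS
    have h1 : frob M (S * A⁻¹) = Matrix.trace ((M * A⁻¹)ᵀ * S) := by
      rw [frob, Matrix.transpose_mul, hAiT, Matrix.trace_mul_comm, Matrix.mul_assoc,
        Matrix.trace_mul_comm]
    have h2 : Matrix.trace ((M * A⁻¹)ᵀ * S) = Matrix.trace ((M * A⁻¹) * S) := by
      conv_lhs => rw [← Matrix.trace_transpose, Matrix.transpose_mul,
        Matrix.transpose_transpose, Matrix.trace_mul_comm]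
      rw [hS.eq]
    have h4 : Matrix.trace ((M * A⁻¹)ᵀ * S) = -Matrix.trace ((M * A⁻¹) * S) := by
      rw [hM, Matrix.neg_mul, Matrix.trace_neg]
    rw [h2] at h4
    rw [h1, h2]
    linarith
  have hproj : ∀ F G : Matrix (Fin 3) (Fin 3) ℝ,
      ((F - G) * A⁻¹)ᵀ = -((F - G) * A⁻¹) → Q3 F = Q3 G :=
    fun F G h => hQ3_proj F G (fun S hS => horth _ h S hS)
  have hcross : ∀ X Y : Matrix (Fin 3) (Fin 3) ℝ,
      Q3 (X + Y) = Q3 X + (B X Y + B Y X) + Q3 Y := by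
    intro X Y
    simp only [hB, map_add, LinearMap.add_apply]
    ring
  -- the matrix K = A⁻¹ * A⁻¹
  have hKsymm : (A⁻¹ * A⁻¹)ᵀ = A⁻¹ * A⁻¹ := by rw [Matrix.transpose_mul, hAiT]
  have hKrow : ∀ j, (A⁻¹ * A⁻¹) 2 j = if (2 : Fin 3) = j then 1 else 0 := by
    intro j
    rw [Matrix.mul_apply, Fin.sum_univ_three, hAinv_row 0, hAinv_row 1, hAinv_row 2]
    simp [hAinv_row j]
  have hKent : ∀ i j, (A⁻¹ * A⁻¹) i j = (A⁻¹ * A⁻¹) j i := fun i j => by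
    conv_lhs => rw [← hKsymm]
    rfl
  have hAient : ∀ i j, A⁻¹ i j = A⁻¹ j i := fun i j => by
    conv_lhs => rw [← hAiT]
    rfl
  have h1K : (1 + A⁻¹ * A⁻¹).PosDef := by
    refine Matrix.PosDef.add_posSemidef Matrix.PosDef.one ?_
    have h := Matrix.posSemidef_conjTranspose_mul_self A⁻¹
    have he : A⁻¹ᴴ = A⁻¹ := by
      ext i j
      simpa [Matrix.conjTranspose_apply] using congrFun (congrFun hAiT i) j
    rwa [he] at h
  have h1Kdet : IsUnit (1 + A⁻¹ * A⁻¹).det := h1K.det_pos.ne'.isUnit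
  -- positivity of Q3 on the range of Nmap
  have hNA : ∀ v : Fin 3 → ℝ, Nmap v * A⁻¹ = Nmap v := by
    intro v
    ext i j
    rw [Matrix.mul_apply, Fin.sum_univ_three]
    by_cases h : j = 2
    · subst h
      simp [Nmap, augment, show Fin.last 2 = (2:Fin 3) from rfl, hAinv_row]
    · simp [Nmap, augment, show Fin.last 2 = (2:Fin 3) from rfl, h, hAinv_row j, Ne.symm h]
  have hqN : ∀ v : Fin 3 → ℝ, v ≠ 0 → 0 < Q3 (Nmap v) := by
    intro v hv
    set w : Fin 3 → ℝ := (1 + A⁻¹ * A⁻¹)⁻¹ *ᵥ v with hwdef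
    have hw : w + (A⁻¹ * A⁻¹) *ᵥ w = v := by
      have h : (1 + A⁻¹ * A⁻¹) *ᵥ w = v := by
        rw [hwdef, Matrix.mulVec_mulVec, Matrix.mul_nonsing_inv _ h1Kdet, Matrix.one_mulVec]
      rw [← h, Matrix.add_mulVec, Matrix.one_mulVec]
    have hw0 := congrFun hw 0
    have hw1 := congrFun hw 1
    have hw2 := congrFun hw 2
    simp only [Pi.add_apply, Matrix.mulVec, dotProduct, Fin.sum_univ_three] at hw0 hw1 hw2
    simp only [Matrix.mul_apply, Fin.sum_univ_three] at hw0 hw1 hw2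
    simp [hAinv_row, hAinv_col, hAient 1 0] at hw0 hw1 hw2
    set S : Matrix (Fin 3) (Fin 3) ℝ :=
      Matrix.of fun i j => w i * (if j = 2 then (1:ℝ) else 0) +
        (if i = 2 then (1:ℝ) else 0) * w j with hSdef
    have hSsymm : S.IsSymm := by
      unfold Matrix.IsSymm
      ext i j
      simp [hSdef, Matrix.transpose_apply]
      ring
    have hwne : w ≠ 0 := by
      intro h
      apply hv
      rw [← hw, h]
      simp
    have hSA : S * A⁻¹ ≠ 0 := by
      intro h0
      have hS0 : S = 0 := by
        have h := congrArg (· * A) h0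
        simpa [Matrix.mul_assoc, hA'A] using h
      apply hwne
      funext i
      fin_cases i
      · have h := congrFun (congrFun hS0 0) 2; simpa [hSdef] using h
      · have h := congrFun (congrFun hS0 1) 2; simpa [hSdef] using h
      · have h := congrFun (congrFun hS0 2) 2
        simp [hSdef] at h
        simpa using h
    have hanti : ((Nmap v - S * A⁻¹) * A⁻¹)ᵀ = -((Nmap v - S * A⁻¹) * A⁻¹) := by
      have hred : (Nmap v - S * A⁻¹) * A⁻¹ = Nmap v - S * (A⁻¹ * A⁻¹) := by
        rw [Matrix.sub_mul, hNA, Matrix.mul_assoc]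
      rw [hred]
      ext i j
      simp only [Matrix.transpose_apply, Matrix.sub_apply, Matrix.neg_apply, Matrix.mul_apply,
        Fin.sum_univ_three]
      fin_cases i <;> fin_cases j <;>
        simp [hSdef, Nmap, augment, show Fin.last 2 = (2:Fin 3) from rfl,
          show ((⟨0, by norm_num⟩ : Fin 3)) = 0 from rfl,
          show ((⟨1, by norm_num⟩ : Fin 3)) = 1 from rfl,
          show ((⟨2, by norm_num⟩ : Fin 3)) = 2 from rfl,
          hAinv_row, hAinv_col, hAient 1 0] <;>
        first
          | ring1
          | linear_combination -hw0
          | linear_combination -hw1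
          | linear_combination hw0
          | linear_combination hw1
          | linear_combination 2*hw2
          | linear_combination -2*hw2
    rw [hproj _ _ hanti]
    exact hQ3_posdef S hSsymm hSA
  -- decomposition of Nmap in the standard basis
  have hNdecomp : ∀ v : Fin 3 → ℝ, Nmap v =
      v 0 • Nmap (Pi.single 0 1) + v 1 • Nmap (Pi.single 1 1) + v 2 • Nmap (Pi.single 2 1) := by
    intro v
    have hv : v = v 0 • (Pi.single 0 1 : Fin 3 → ℝ) + v 1 • (Pi.single 1 1 : Fin 3 → ℝ)
        + v 2 • (Pi.single 2 1 : Fin 3 → ℝ) := by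
      funext i; fin_cases i <;> simp [Pi.single_apply]
    conv_lhs => rw [hv]
    simp [map_add, _root_.map_smul]
  set X : Fin 3 → Matrix (Fin 3) (Fin 3) ℝ := fun i => Nmap (Pi.single i 1) with hXdef
  set Γ : Matrix (Fin 3) (Fin 3) ℝ :=
    Matrix.of (fun i j => (B (X i) (X j) + B (X j) (X i))/2) with hΓdef
  have hQv : ∀ v : Fin 3 → ℝ, Q3 (Nmap v) = v ⬝ᵥ (Γ *ᵥ v) := by
    intro v
    rw [hB, hNdecomp v]
    simp only [map_add, _root_.map_smul, LinearMap.add_apply, LinearMap.smul_apply, smul_eq_mul,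
      Matrix.mulVec, dotProduct, Fin.sum_univ_three, hΓdef, Matrix.of_apply]
    ring
  have hΓpos : Γ.PosDef := by
    refine Matrix.posDef_iff_dotProduct_mulVec.mpr ⟨?_, ?_⟩
    · show Γᴴ = Γ
      ext i j
      simp [hΓdef, Matrix.conjTranspose_apply]
      ring
    · intro x hx
      have hs : star x = x := by funext i; simp
      rw [hs, ← hQv]
      exact hqN x hx
  have hΓdet : IsUnit Γ.det := hΓpos.det_pos.ne'.isUnit
  set bv : Matrix (Fin 2) (Fin 2) ℝ → (Fin 3 → ℝ) :=
    fun F₂ j => (B (Lmap F₂) (X j) + B (X j) (Lmap F₂))/2 with hbvdef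
  set cf : Matrix (Fin 2) (Fin 2) ℝ → (Fin 3 → ℝ) := fun F₂ => -(Γ⁻¹ *ᵥ bv F₂) with hcfdef
  have hΓc : ∀ F₂, Γ *ᵥ cf F₂ = -(bv F₂) := by
    intro F₂
    rw [hcfdef]
    dsimp only
    rw [Matrix.mulVec_neg, Matrix.mulVec_mulVec, Matrix.mul_nonsing_inv _ hΓdet,
      Matrix.one_mulVec]
  have hNE : ∀ F₂ (u : Fin 3 → ℝ),
      B (Lmap F₂ + Nmap (cf F₂)) (Nmap u) + B (Nmap u) (Lmap F₂ + Nmap (cf F₂)) = 0 := by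
    intro F₂ u
    have h0 := congrFun (hΓc F₂) 0
    have h1 := congrFun (hΓc F₂) 1
    have h2 := congrFun (hΓc F₂) 2
    simp only [Matrix.mulVec, dotProduct, Fin.sum_univ_three, hΓdef, hbvdef,
      Matrix.of_apply, Pi.neg_apply] at h0 h1 h2
    rw [hNdecomp u, hNdecomp (cf F₂)]
    simp only [map_add, _root_.map_smul, LinearMap.add_apply, LinearMap.smul_apply, smul_eq_mul,
      ← hXdef]
    linear_combination (2*u 0)*h0 + (2*u 1)*h1 + (2*u 2)*h2
  have hmin : ∀ F₂ (v : Fin 3 → ℝ),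
      Q3 (Lmap F₂ + Nmap (cf F₂)) ≤ Q3 (Lmap F₂ + Nmap v) := by
    intro F₂ v
    have hsplit : Lmap F₂ + Nmap v = (Lmap F₂ + Nmap (cf F₂)) + Nmap (v - cf F₂) := by
      rw [map_sub]
      abel
    rw [hsplit, hcross (Lmap F₂ + Nmap (cf F₂)) (Nmap (v - cf F₂)), hNE F₂ (v - cf F₂)]
    have h := hQ3_nonneg (Nmap (v - cf F₂))
    linarith
  -- kill the third row using an antisymmetric perturbation
  have hrk : ∀ F' : Matrix (Fin 3) (Fin 3) ℝ, ∃ v, Q3 F' = Q3 (augment (blk F') v) := by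
    intro F'
    have hd : A.det ≠ 0 := hA_pos.det_pos.ne'
    have hdform : A.det = A 0 0 * A 1 1 - A 0 1 * A 1 0 := by
      rw [Matrix.det_fin_three, hA13, hA23, hA31, hA32, hA33]
      ring
    set α := (F' 2 0 * A 1 1 - F' 2 1 * A 1 0)/A.det with hα
    set β := (A 0 0 * F' 2 1 - A 0 1 * F' 2 0)/A.det with hβ
    refine ⟨![F' 0 2 + α, F' 1 2 + β, F' 2 2], ?_⟩
    apply hproj
    have hD : F' - augment (blk F') ![F' 0 2 + α, F' 1 2 + β, F' 2 2] =
        !![0,0,-α; 0,0,-β; α,β,0] * A := by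
      ext i j
      fin_cases i <;> fin_cases j <;>
        simp [augment, blk, Matrix.mul_apply, Fin.sum_univ_three,
          show Fin.last 2 = (2:Fin 3) from rfl,
          show ((⟨0, by norm_num⟩ : Fin 3)) = 0 from rfl,
          show ((⟨1, by norm_num⟩ : Fin 3)) = 1 from rfl,
          show ((⟨2, by norm_num⟩ : Fin 3)) = 2 from rfl,
          hA13, hA23, hA31, hA32, hA33] <;>
        first
          | ring1
          | (rw [hα, hβ]; field_simp; ring_nf; linear_combination (F' 2 0) * hdform)
          | (rw [hα, hβ]; field_simp; ring_nf; linear_combination (F' 2 1) * hdform)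
          | (rw [hα, hβ]; field_simp; ring_nf; linear_combination (-(F' 2 0)) * hdform)
          | (rw [hα, hβ]; field_simp; ring_nf; linear_combination (-(F' 2 1)) * hdform)
    rw [hD, Matrix.mul_assoc, hAA, Matrix.mul_one]
    ext i j
    fin_cases i <;> fin_cases j <;> simp
  -- the value of the infimum
  have key : ∀ F₂, Q2 F₂ = Q3 (augment F₂ (cf F₂)) := by
    intro F₂
    rw [hQ2]
    have hmem : Q3 (augment F₂ (cf F₂)) ∈
        {q | ∃ F' : Matrix (Fin 3) (Fin 3) ℝ, blk F' = F₂ ∧ q = Q3 F'} :=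
      ⟨augment F₂ (cf F₂), blk_augment _ _, rfl⟩
    have hlb : ∀ q ∈ {q | ∃ F' : Matrix (Fin 3) (Fin 3) ℝ, blk F' = F₂ ∧ q = Q3 F'},
        Q3 (augment F₂ (cf F₂)) ≤ q := by
      rintro q ⟨F', hb, rfl⟩
      obtain ⟨v, hv⟩ := hrk F'
      rw [hv, hb, augment_eq, augment_eq]
      exact hmin F₂ v
    exact le_antisymm (csInf_le ⟨_, fun q hq => hlb q hq⟩ hmem) (le_csInf ⟨_, hmem⟩ hlb)
  -- cf is linear
  have hbv_add : ∀ x y, bv (x + y) = bv x + bv y := by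
    intro x y
    funext j
    simp [hbvdef, map_add, LinearMap.add_apply]
    ring
  have hbv_smul : ∀ (r : ℝ) x, bv (r • x) = r • bv x := by
    intro r x
    funext j
    simp [hbvdef, _root_.map_smul, LinearMap.smul_apply, smul_eq_mul]
    ring
  let c : Matrix (Fin 2) (Fin 2) ℝ →ₗ[ℝ] (Fin 3 → ℝ) :=
    { toFun := cf
      map_add' := by
        intro x y
        simp only [hcfdef, hbv_add, Matrix.mulVec_add]
        abel
      map_smul' := by
        intro r x
        simp only [hcfdef, hbv_smul, Matrix.mulVec_smul, RingHom.id_apply, smul_neg] }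
  refine ⟨fun F₂ => ⟨augment F₂ (cf F₂), blk_augment _ _, (key F₂).symm⟩, ?_, ⟨c, fun F₂ => key F₂⟩⟩
  refine ⟨B.compl₁₂ (Lmap + Nmap ∘ₗ c) (Lmap + Nmap ∘ₗ c), fun F₂ => ?_⟩
  rw [key F₂, augment_eq, hB]
  simp only [LinearMap.compl₁₂_apply, LinearMap.add_apply, LinearMap.comp_apply]
  rfl
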